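/- A channel Λ : L(H_E) → L(H_B) is entanglement-breaking (i.e., (Λ ⊗ id)(ρ) is separable for every state ρ on H_E ⊗ H_{E'} and every finite-dimensional H_{E'}) if and only if its normalized Choi operator J(Λ)/dim(H_E) is a separable state on H_E ⊗ H_B. -/

import Mathlib

open Matrix
open scoped Kronecker ComplexOrder

noncomputable section

variable {n : Type*} [Fintype n] [DecidableEq n]

/-- Square root of a positive semidefinite matrix (0 if not PSD). -/
def msqrt (M : Matrix n n ℂ) : Matrix n n ℂ := by
  classical exact if h : M.PosSemidef then
    (h.1.eigenvectorUnitary : Matrix n n ℂ) *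
      Matrix.diagonal ((↑) ∘ (Real.sqrt ∘ h.1.eigenvalues)) *
      (star h.1.eigenvectorUnitary : Matrix n n ℂ) else 0

/-- Trace norm ‖M‖₁ = tr √(M Mᴴ). -/
def traceNorm (M : Matrix n n ℂ) : ℝ := ((msqrt (M * Mᴴ)).trace).re

/-- Trace distance (1/2)‖ρ − σ‖₁. -/
def traceDist (ρ σ : Matrix n n ℂ) : ℝ := traceNorm (ρ - σ) / 2

/-- Uhlmann fidelity F(ρ,σ) = (tr √(√σ ρ √σ))². -/
def fidelity (ρ σ : Matrix n n ℂ) : ℝ :=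
  (((msqrt (msqrt σ * ρ * msqrt σ)).trace).re) ^ 2

/-- Density operator: positive semidefinite with unit trace. -/
def IsDensity (ρ : Matrix n n ℂ) : Prop := ρ.PosSemidef ∧ ρ.trace = 1

/-- Rank-one operator |v⟩⟨v| associated with a vector. -/
def vecState {α : Type*} (v : α → ℂ) : Matrix α α ℂ :=
  Matrix.of fun i j => v i * (starRingEnd ℂ) (v j)

/-- Pure state: |v⟩⟨v| for some unit vector v. -/
def IsPure {α : Type*} [Fintype α] (φ : Matrix α α ℂ) : Prop :=
  ∃ v : α → ℂ, (∑ i, Complex.normSq (v i)) = 1 ∧ φ = vecState v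

/-- Set of separable states across the cut α : β. -/
def SepSet (α β : Type*) [Fintype α] [Fintype β] : Set (Matrix (α × β) (α × β) ℂ) :=
  convexHull ℝ {σ | ∃ φ ψ, IsPure φ ∧ IsPure ψ ∧ σ = φ ⊗ₖ ψ}

variable {α β : Type*} [Fintype α] [Fintype β] [DecidableEq α] [DecidableEq β]

/-- Extension Γ ⊗ id of a linear map on matrices by a k-dimensional ancilla. -/
def lmapExt (Γ : Matrix α α ℂ →ₗ[ℂ] Matrix β β ℂ) (k : ℕ)
    (M : Matrix (α × Fin k) (α × Fin k) ℂ) : Matrix (β × Fin k) (β × Fin k) ℂ :=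
  Matrix.of fun im jn => Γ (Matrix.of fun p q => M (p, im.2) (q, jn.2)) im.1 jn.1

/-- Completely positive trace-preserving linear map. -/
def IsCPTP (Γ : Matrix α α ℂ →ₗ[ℂ] Matrix β β ℂ) : Prop :=
  (∀ (k : ℕ) (M : Matrix (α × Fin k) (α × Fin k) ℂ), M.PosSemidef →
    (lmapExt Γ k M).PosSemidef) ∧ (∀ M, (Γ M).trace = M.trace)

/-- Partial trace over the second tensor factor. -/
def ptrB (M : Matrix (α × β) (α × β) ℂ) : Matrix α α ℂ :=
  Matrix.of fun i j => ∑ m, M (i, m) (j, m)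

/-- Partial trace over the first tensor factor. -/
def ptrA (M : Matrix (α × β) (α × β) ℂ) : Matrix β β ℂ :=
  Matrix.of fun i j => ∑ m, M (m, i) (m, j)

/-- Choi operator J(Λ) = Σ_{i,j} |i⟩⟨j| ⊗ Λ(|i⟩⟨j|). -/
def choi (Λ : Matrix α α ℂ →ₗ[ℂ] Matrix β β ℂ) : Matrix (α × β) (α × β) ℂ :=
  Matrix.of fun p q => Λ (Matrix.single p.1 q.1 1) p.2 q.2

/-- Entanglement-breaking channel: all extended outputs are separable. -/
def IsEB (Λ : Matrix α α ℂ →ₗ[ℂ] Matrix β β ℂ) : Prop :=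
  IsCPTP Λ ∧ ∀ (k : ℕ) (ρ : Matrix (α × Fin k) (α × Fin k) ℂ), IsDensity ρ →
    lmapExt Λ k ρ ∈ SepSet β (Fin k)

end


section Helpers
set_option linter.unusedSectionVars false
open scoped ComplexOrder

variable {α β : Type*} [Fintype α] [Fintype β] [DecidableEq α] [DecidableEq β]

lemma vecState_posSemidef (v : α → ℂ) : (vecState v).PosSemidef := by
  refine Matrix.PosSemidef.of_dotProduct_mulVec_nonneg ?_ ?_
  · ext i j
    simp [vecState, Matrix.IsHermitian, Matrix.conjTranspose_apply, mul_comm]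
  · intro x
    have h : star x ⬝ᵥ (vecState v) *ᵥ x
        = star (∑ j, (starRingEnd ℂ) (v j) * x j) * (∑ j, (starRingEnd ℂ) (v j) * x j) := by
      simp only [dotProduct, mulVec, vecState, Matrix.of_apply, star_sum, StarMul.star_mul,
        Finset.sum_mul, Finset.mul_sum, Pi.star_apply]
      rw [Finset.sum_comm]
      refine Finset.sum_congr rfl fun i _ => Finset.sum_congr rfl fun j _ => ?_
      simp only [RCLike.star_def, starRingEnd_self_apply, _root_.map_mul,
        RingHomCompTriple.comp_apply, RingHom.id_apply, Complex.conj_conj]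
      ring
    rw [h]
    exact star_mul_self_nonneg _

lemma vecState_trace (v : α → ℂ) :
    (vecState v).trace = ((∑ i, Complex.normSq (v i) : ℝ) : ℂ) := by
  simp [Matrix.trace, vecState, Matrix.diag, Complex.mul_conj]

lemma isPure_trace {φ : Matrix α α ℂ} (h : IsPure φ) : φ.trace = 1 := by
  obtain ⟨v, hv, rfl⟩ := h
  rw [vecState_trace, hv]; norm_num

lemma mat_decomp (M : Matrix α β ℂ) :
    M = ∑ m, ∑ n, M m n • Matrix.single m n (1:ℂ) := by
  ext i j
  simp [Matrix.sum_apply, Matrix.single, ite_and, Finset.sum_ite_eq]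

/-- Entry formula for `lmapExt` in terms of the Choi matrix. -/
lemma lmapExt_entry (Λ : Matrix α α ℂ →ₗ[ℂ] Matrix β β ℂ) (k : ℕ)
    (M : Matrix (α × Fin k) (α × Fin k) ℂ) (x y : β) (i j : Fin k) :
    lmapExt Λ k M (x, i) (y, j)
      = ∑ m, ∑ n, M (m, i) (n, j) * choi Λ (m, x) (n, y) := by
  show Λ (Matrix.of fun p q => M (p, i) (q, j)) x y = _
  conv_lhs => rw [mat_decomp (Matrix.of fun p q => M (p, i) (q, j))]
  simp only [map_sum, LinearMap.map_smul, Matrix.sum_apply, Matrix.smul_apply, Matrix.of_apply,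
    smul_eq_mul, choi]

/-- The trace of `lmapExt Λ k M` equals the trace of `M` for trace-preserving `Λ`. -/
lemma lmapExt_trace (Λ : Matrix α α ℂ →ₗ[ℂ] Matrix β β ℂ)
    (hΛ : ∀ M, (Λ M).trace = M.trace) (k : ℕ)
    (M : Matrix (α × Fin k) (α × Fin k) ℂ) :
    (lmapExt Λ k M).trace = M.trace := by
  have : (lmapExt Λ k M).trace = ∑ i : Fin k, (Λ (Matrix.of fun p q => M (p, i) (q, i))).trace := by
    simp only [Matrix.trace, Matrix.diag, lmapExt, Matrix.of_apply]
    rw [Fintype.sum_prod_type, Finset.sum_comm]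
  rw [this]
  simp only [hΛ]
  simp only [Matrix.trace, Matrix.diag, Matrix.of_apply]
  rw [Fintype.sum_prod_type, Finset.sum_comm]

/-- Swapping the tensor factors preserves separability. -/
lemma sepSet_swap {M : Matrix (α × β) (α × β) ℂ} (h : M ∈ SepSet α β) :
    (Matrix.of fun p q => M (p.2, p.1) (q.2, q.1) : Matrix (β × α) (β × α) ℂ)
      ∈ SepSet β α := by
  let f : Matrix (α × β) (α × β) ℂ →ₗ[ℝ] Matrix (β × α) (β × α) ℂ :=
    { toFun := fun N => Matrix.of fun p q => N (p.2, p.1) (q.2, q.1)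
      map_add' := by intros; ext ⟨p1, p2⟩ ⟨q1, q2⟩; simp
      map_smul' := by intros; ext ⟨p1, p2⟩ ⟨q1, q2⟩; simp }
  have himg : f M ∈ f '' SepSet α β := ⟨M, h, rfl⟩
  rw [SepSet, f.image_convexHull] at himg
  refine convexHull_mono ?_ himg
  rintro _ ⟨σ, ⟨φ, ψ, hφ, hψ, rfl⟩, rfl⟩
  refine ⟨ψ, φ, hψ, hφ, ?_⟩
  ext ⟨p1, p2⟩ ⟨q1, q2⟩
  simp [f, Matrix.kroneckerMap_apply, mul_comm]

end Helpers


theorem eb_iff_choi_separable {e b : ℕ} (he : 0 < e)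
    (Λ : Matrix (Fin e) (Fin e) ℂ →ₗ[ℂ] Matrix (Fin b) (Fin b) ℂ) (hΛ : IsCPTP Λ) :
    (∀ (k : ℕ) (ρ : Matrix (Fin e × Fin k) (Fin e × Fin k) ℂ), IsDensity ρ →
        lmapExt Λ k ρ ∈ SepSet (Fin b) (Fin k)) ↔
      (e : ℝ)⁻¹ • choi Λ ∈ SepSet (Fin e) (Fin b) := by
  have hene : (e : ℝ) ≠ 0 := Nat.cast_ne_zero.mpr he.ne'
  constructor
  · -- EB implies Choi separable
    intro hEB
    set v : Fin e × Fin e → ℂ :=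
      fun p => if p.1 = p.2 then ((Real.sqrt e : ℝ) : ℂ)⁻¹ else 0 with hv
    have hΦden : IsDensity (vecState v) := by
      refine ⟨vecState_posSemidef v, ?_⟩
      rw [vecState_trace]
      have h1 : ∑ p : Fin e × Fin e, Complex.normSq (v p) = 1 := by
        rw [Fintype.sum_prod_type]
        have : ∀ m n : Fin e, Complex.normSq (v (m, n))
            = if m = n then (Real.sqrt e)⁻¹ * (Real.sqrt e)⁻¹ else 0 := by
          intro m n
          by_cases h : m = n <;>
            simp [hv, h, ← Complex.ofReal_inv, Complex.normSq_ofReal]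
        simp only [this, Finset.sum_ite_eq, Finset.mem_univ, if_true]
        rw [Finset.sum_const, Finset.card_univ, Fintype.card_fin, ← mul_inv,
          Real.mul_self_sqrt (Nat.cast_nonneg e), nsmul_eq_mul, mul_inv_cancel₀ hene]
      rw [h1]; norm_num
    have h := hEB e (vecState v) hΦden
    have hswap : (e : ℝ)⁻¹ • choi Λ
        = (Matrix.of fun p q => (lmapExt Λ e (vecState v)) (p.2, p.1) (q.2, q.1) :
            Matrix (Fin e × Fin b) (Fin e × Fin b) ℂ) := by
      ext ⟨m, x⟩ ⟨n, y⟩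
      rw [Matrix.smul_apply, Matrix.of_apply]
      show _ = lmapExt Λ e (vecState v) (x, m) (y, n)
      rw [lmapExt_entry]
      have hvec : ∀ m' n' : Fin e, vecState v (m', m) (n', n)
          = if m' = m then (if n' = n then (((e : ℝ)⁻¹ : ℝ) : ℂ) else 0) else 0 := by
        intro m' n'
        simp only [vecState, Matrix.of_apply, hv]
        by_cases h1 : m' = m <;> by_cases h2 : n' = n <;>
          simp [h1, h2, ← Complex.ofReal_inv, ← Complex.ofReal_mul, ← mul_inv,
            Real.mul_self_sqrt (Nat.cast_nonneg e)]
      rw [Complex.real_smul,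
        Finset.sum_eq_single m
          (fun m' _ hne => Finset.sum_eq_zero fun n' _ => by simp [hvec, hne])
          (fun h => absurd (Finset.mem_univ m) h),
        Finset.sum_eq_single n (fun n' _ hne => by simp [hvec, hne])
          (fun h => absurd (Finset.mem_univ n) h)]
      simp [hvec]
    rw [hswap]
    exact sepSet_swap h
  · -- Choi separable implies EB
    intro hsep k ρ hρ
    rcases Nat.eq_zero_or_pos k with hk | hk
    · exfalso
      have h0 : ρ.trace = 0 := by
        subst hk
        rw [Matrix.trace]
        apply Finset.sum_eq_zero
        rintro ⟨-, ⟨-, h⟩⟩ -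
        omega
      rw [hρ.2] at h0
      exact one_ne_zero h0
    rw [SepSet, convexHull_eq] at hsep
    obtain ⟨ι, t, w, z, hw0, hw1, hz, hcm⟩ := hsep
    rw [Finset.centerMass_eq_of_sum_1 _ _ hw1] at hcm
    have hz' : ∀ c : ι, ∃ (u : Fin e → ℂ) (vv : Fin b → ℂ), c ∈ t →
        (∑ i, Complex.normSq (u i)) = 1 ∧ (∑ i, Complex.normSq (vv i)) = 1 ∧
        z c = vecState u ⊗ₖ vecState vv := by
      intro c
      by_cases hc : c ∈ t
      · obtain ⟨φ, ψ, ⟨u, hu, rfl⟩, ⟨vv, hvv, rfl⟩, hzz⟩ := hz c hc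
        exact ⟨u, vv, fun _ => ⟨hu, hvv, hzz⟩⟩
      · exact ⟨0, 0, fun h => absurd h hc⟩
    choose u vv huv using hz'
    -- entries of the Choi matrix
    have hchoi : ∀ (m n : Fin e) (x y : Fin b), choi Λ (m, x) (n, y)
        = ((e : ℝ) : ℂ) * ∑ c ∈ t, ((w c : ℝ) : ℂ) *
            ((u c m * (starRingEnd ℂ) (u c n)) * (vv c x * (starRingEnd ℂ) (vv c y))) := by
      intro m n x y
      have h1 : choi Λ (m, x) (n, y)
          = ((e : ℝ) : ℂ) * (((e : ℝ)⁻¹ • choi Λ) (m, x) (n, y)) := by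
        rw [Matrix.smul_apply, Complex.real_smul, ← mul_assoc, ← Complex.ofReal_mul,
          mul_inv_cancel₀ hene, Complex.ofReal_one, one_mul]
      rw [h1, ← hcm, Matrix.sum_apply]
      congr 1
      refine Finset.sum_congr rfl fun c hc => ?_
      rw [Matrix.smul_apply, Complex.real_smul, (huv c hc).2.2,
        Matrix.kroneckerMap_apply]
      simp only [vecState, Matrix.of_apply]
    -- compressed states on the ancilla
    set B : ι → Matrix (Fin e × Fin k) (Fin k) ℂ :=
      fun c => Matrix.of fun p j => if p.2 = j then (starRingEnd ℂ) (u c p.1) else 0 with hB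
    set τ : ι → Matrix (Fin k) (Fin k) ℂ := fun c => (B c)ᴴ * ρ * (B c) with hτ
    have hτpsd : ∀ c, (τ c).PosSemidef := fun c => hρ.1.conjTranspose_mul_mul_same (B c)
    have hτentry : ∀ c (i j : Fin k), τ c i j
        = ∑ m, ∑ n, u c m * ρ (m, i) (n, j) * (starRingEnd ℂ) (u c n) := by
      intro c i j
      simp only [hτ, hB, Matrix.mul_apply, Matrix.conjTranspose_apply, Matrix.of_apply,
        Fintype.sum_prod_type]
      simp only [apply_ite (starRingEnd ℂ), map_zero, Complex.conj_conj, ite_mul, zero_mul,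
        mul_ite, mul_zero, Finset.sum_ite_eq', Finset.mem_univ, if_true, Finset.sum_mul,
        Finset.mul_sum]
      rw [Finset.sum_comm]
      refine Finset.sum_congr rfl fun m _ => Finset.sum_congr rfl fun n _ => ?_
      simp only [apply_ite (star : ℂ → ℂ), star_zero, RCLike.star_def, Complex.conj_conj,
        ite_mul, zero_mul, Finset.sum_ite_eq', Finset.mem_univ, if_true]
    have hAex : ∀ c, ∃ A : Matrix (Fin k) (Fin k) ℂ, τ c = Aᴴ * A :=
      fun c => by
        open scoped MatrixOrder in
        obtain ⟨B, hB⟩ := CStarAlgebra.nonneg_iff_eq_star_mul_self.mp (hτpsd c).nonneg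
        exact ⟨B, hB⟩
    choose A hA using hAex
    set g : ι → Fin k → Fin k → ℂ := fun c r i => (starRingEnd ℂ) (A c r i) with hg
    have hτdecomp : ∀ c, τ c = ∑ r, vecState (g c r) := by
      intro c
      rw [hA c]
      ext i j
      simp only [Matrix.mul_apply, Matrix.conjTranspose_apply, Matrix.sum_apply,
        vecState, Matrix.of_apply, hg, RCLike.star_def, Complex.conj_conj]
      try exact Finset.sum_congr rfl fun r _ => by ring
    set N : ι → Fin k → ℝ := fun c r => ∑ i, Complex.normSq (g c r i) with hN
    have hN0 : ∀ c r, 0 ≤ N c r :=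
      fun c r => Finset.sum_nonneg fun i _ => Complex.normSq_nonneg _
    set e0 : Fin k → ℂ := fun i => if i = ⟨0, hk⟩ then 1 else 0 with he0
    set pt : ι × Fin k → Matrix (Fin b × Fin k) (Fin b × Fin k) ℂ := fun cr =>
      vecState (vv cr.1) ⊗ₖ (if N cr.1 cr.2 = 0 then vecState e0
        else vecState ((Real.sqrt (N cr.1 cr.2))⁻¹ • g cr.1 cr.2)) with hpt
    set wt : ι × Fin k → ℝ := fun cr => (e : ℝ) * w cr.1 * N cr.1 cr.2 with hwt
    set T : Finset (ι × Fin k) := t ×ˢ Finset.univ with hT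
    have hwt0 : ∀ cr ∈ T, 0 ≤ wt cr := by
      rintro ⟨c, r⟩ hcr
      obtain ⟨hct, -⟩ := Finset.mem_product.mp hcr
      exact mul_nonneg (mul_nonneg (Nat.cast_nonneg e) (hw0 c hct)) (hN0 c r)
    have hptmem : ∀ cr ∈ T,
        pt cr ∈ {σ : Matrix (Fin b × Fin k) (Fin b × Fin k) ℂ |
          ∃ φ ψ, IsPure φ ∧ IsPure ψ ∧ σ = φ ⊗ₖ ψ} := by
      rintro ⟨c, r⟩ hcr
      obtain ⟨hct, -⟩ := Finset.mem_product.mp hcr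
      refine ⟨_, _, ⟨vv c, (huv c hct).2.1, rfl⟩, ?_, rfl⟩
      by_cases hNz : N c r = 0
      · rw [if_pos hNz]
        refine ⟨e0, ?_, rfl⟩
        have : ∀ i : Fin k, Complex.normSq (e0 i) = if i = ⟨0, hk⟩ then 1 else 0 := by
          intro i
          by_cases h : i = ⟨0, hk⟩ <;> simp [he0, h]
        simp [this, Finset.sum_ite_eq]
      · rw [if_neg hNz]
        refine ⟨_, ?_, rfl⟩
        have hns : ∀ i : Fin k, Complex.normSq (((Real.sqrt (N c r))⁻¹ • g c r) i)
            = (Real.sqrt (N c r))⁻¹ * (Real.sqrt (N c r))⁻¹ * Complex.normSq (g c r i) := by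
          intro i
          rw [Pi.smul_apply, Complex.real_smul, Complex.normSq_mul, Complex.normSq_ofReal]
        have hNdef : (∑ i, Complex.normSq (g c r i)) = N c r := rfl
        rw [Finset.sum_congr rfl fun i _ => hns i, ← Finset.mul_sum, hNdef, ← mul_inv,
          Real.mul_self_sqrt (hN0 c r), inv_mul_cancel₀ hNz]
    have hvsc : ∀ (r : ℝ) (gv : Fin k → ℂ), vecState (r • gv) = (r * r) • vecState gv := by
      intro r gv
      ext i j
      simp only [vecState, Matrix.of_apply, Pi.smul_apply, Complex.real_smul,
        Matrix.smul_apply, _root_.map_mul, Complex.conj_ofReal, Complex.ofReal_mul]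
      ring
    have hkey : ∀ cr : ι × Fin k, wt cr • pt cr
        = ((e : ℝ) * w cr.1) • (vecState (vv cr.1) ⊗ₖ vecState (g cr.1 cr.2)) := by
      rintro ⟨c, r⟩
      by_cases hNz : N c r = 0
      · have hg0 : g c r = 0 := by
          funext i
          have h0 := (Finset.sum_eq_zero_iff_of_nonneg
            (fun i (_ : i ∈ Finset.univ) => Complex.normSq_nonneg (g c r i))).mp hNz
          exact Complex.normSq_eq_zero.mp (h0 i (Finset.mem_univ i))
        have hv0 : vecState (g c r) = 0 := by
          ext i j; simp [vecState, hg0]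
        simp [hwt, hNz, hv0, hpt]
      · simp only [hpt, hwt, if_neg hNz]
        rw [hvsc, Matrix.kronecker_smul, smul_smul, ← mul_inv,
          Real.mul_self_sqrt (hN0 c r), mul_inv_cancel_right₀ hNz]
    have hsum_r : ∀ c, (∑ r : Fin k, ((e : ℝ) * w c) •
          (vecState (vv c) ⊗ₖ vecState (g c r)))
        = ((e : ℝ) * w c) • (vecState (vv c) ⊗ₖ τ c) := by
      intro c
      rw [← Finset.smul_sum, hτdecomp c]
      congr 1
      ext ⟨x, i⟩ ⟨y, j⟩
      simp [Matrix.sum_apply, Matrix.kroneckerMap_apply, Finset.mul_sum]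
    have htotal : ∑ cr ∈ T, wt cr • pt cr = lmapExt Λ k ρ := by
      rw [hT, Finset.sum_product]
      simp only [hkey]
      rw [Finset.sum_congr rfl fun c (hc : c ∈ t) => hsum_r c]
      ext ⟨x, i⟩ ⟨y, j⟩
      rw [Matrix.sum_apply, lmapExt_entry]
      have hL : ∀ c ∈ t, (((e : ℝ) * w c) • (vecState (vv c) ⊗ₖ τ c)) (x, i) (y, j)
          = ∑ m, ∑ n, (((e : ℝ) : ℂ) * ((w c : ℝ) : ℂ)) *
              ((vv c x * (starRingEnd ℂ) (vv c y)) *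
                (u c m * ρ (m, i) (n, j) * (starRingEnd ℂ) (u c n))) := by
        intro c hc
        rw [Matrix.smul_apply, Matrix.kroneckerMap_apply, hτentry]
        simp only [vecState, Matrix.of_apply, Complex.real_smul, Complex.ofReal_mul,
          Finset.mul_sum]
        try exact Finset.sum_congr rfl fun m _ => Finset.sum_congr rfl fun n _ => by ring
      have hR : (∑ m, ∑ n, ρ (m, i) (n, j) * choi Λ (m, x) (n, y))
          = ∑ c ∈ t, ∑ m, ∑ n, (((e : ℝ) : ℂ) * ((w c : ℝ) : ℂ)) *
              ((vv c x * (starRingEnd ℂ) (vv c y)) *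
                (u c m * ρ (m, i) (n, j) * (starRingEnd ℂ) (u c n))) := by
        simp only [hchoi, Finset.mul_sum]
        rw [Finset.sum_congr rfl fun (m : Fin e) (_ : m ∈ Finset.univ) =>
          (Finset.sum_comm : (∑ n : Fin e, ∑ c ∈ t, _) = _)]
        rw [Finset.sum_comm]
        try exact Finset.sum_congr rfl fun c _ => Finset.sum_congr rfl fun m _ =>
          Finset.sum_congr rfl fun n _ => by ring
      rw [Finset.sum_congr rfl hL, hR]
    have htr : ((∑ cr ∈ T, wt cr : ℝ) : ℂ) = 1 := by
      have h1 : (lmapExt Λ k ρ).trace = 1 := by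
        rw [lmapExt_trace Λ hΛ.2, hρ.2]
      rw [← htotal, Matrix.trace_sum] at h1
      have h2 : ∀ cr ∈ T, (wt cr • pt cr).trace = ((wt cr : ℝ) : ℂ) := by
        intro cr hcr
        rw [Matrix.trace_smul]
        obtain ⟨φ, ψ, hφ, hψ, hpteq⟩ := hptmem cr hcr
        rw [hpteq, Matrix.trace_kronecker, isPure_trace hφ, isPure_trace hψ]
        simp [Complex.real_smul]
      rw [Finset.sum_congr rfl h2] at h1
      rw [← h1, Complex.ofReal_sum]
    have hws : ∑ cr ∈ T, wt cr = 1 := by exact_mod_cast htr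
    have hmem := Finset.centerMass_mem_convexHull T hwt0 (by rw [hws]; norm_num) hptmem
    rwa [Finset.centerMass_eq_of_sum_1 _ _ hws, htotal] at hmem
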